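/- Let m > n ≥ 1 and consider vectors λ in Q^{m+n} of the form λ = Σ a_{ij}(ε_i − δ_j), summing over pairs with r < i ≤ m and 1 ≤ j ≤ n (where r = n), with all coefficients a_{ij} ≥ 0. If λ satisfies ⟨ε_t − ε_{t+1}, λ⟩ ≥ 0 for all r ≤ t ≤ m−1, then all a_{ij} = 0, i.e., λ = 0. -/
import Mathlib

/-- `ε_i`, a standard basis vector among the first `m` coordinates of `ℚ^{m+n}`. -/
noncomputable def epsV (m n : ℕ) (i : Fin m) : (Fin m ⊕ Fin n) → ℚ := Pi.single (Sum.inl i) 1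

/-- `δ_j`, a standard basis vector among the last `n` coordinates of `ℚ^{m+n}`. -/
noncomputable def deltaV (m n : ℕ) (j : Fin n) : (Fin m ⊕ Fin n) → ℚ := Pi.single (Sum.inr j) 1

/-- Let `m > n ≥ 1` and `r = n`.  If `λ = Σ a_{ij} (ε_i - δ_j)`, summing over pairs with
`r < i ≤ m` and `1 ≤ j ≤ n` (0-indexed: rows `i` with `n ≤ i`), all `a_{ij} ≥ 0`, and
`⟨ε_t - ε_{t+1}, λ⟩ ≥ 0` for all `r ≤ t ≤ m - 1`, then all `a_{ij} = 0`, i.e. `λ = 0`. -/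
theorem stmt3 (m n : ℕ) (hn : 1 ≤ n) (hmn : n < m)
    (a : Fin m → Fin n → ℚ)
    (ha0 : ∀ i j, 0 ≤ a i j)
    (hsupp : ∀ (i : Fin m) (j : Fin n), (i : ℕ) < n → a i j = 0)
    (lam : (Fin m ⊕ Fin n) → ℚ)
    (hlam : lam = ∑ i, ∑ j, a i j • (epsV m n i - deltaV m n j))
    (hdom : ∀ (t : Fin m) (ht : (t : ℕ) + 1 < m), n ≤ (t : ℕ) + 1 →
      0 ≤ ∑ x, (epsV m n t - epsV m n ⟨(t : ℕ) + 1, ht⟩) x * lam x) :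
    (∀ i j, a i j = 0) ∧ lam = 0 := by
  have hlv : ∀ k : Fin m, lam (Sum.inl k) = ∑ j, a k j := by
    intro k
    simp [hlam, epsV, deltaV, Finset.sum_apply, Pi.single_apply, mul_sub]
  have hinner : ∀ t t' : Fin m,
      ∑ x, (epsV m n t - epsV m n t') x * lam x = lam (Sum.inl t) - lam (Sum.inl t') := by
    intro t t'
    simp [epsV, Fintype.sum_sum_type, Pi.single_apply, sub_mul]
  -- row sums vanish for k ≥ n - 1
  have rows : ∀ (k : ℕ) (hk : k < m), n - 1 ≤ k → (∑ j, a ⟨k, hk⟩ j) = 0 := by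
    intro k
    induction k with
    | zero =>
      intro hk hnk
      refine Finset.sum_eq_zero fun j _ => hsupp _ j ?_
      simp only []
      omega
    | succ t ih =>
      intro hk hnk
      by_cases hc : t + 1 < n
      · exact Finset.sum_eq_zero fun j _ => hsupp _ j hc
      · push_neg at hc
        have ht : t < m := Nat.lt_of_succ_lt hk
        have hd := hdom ⟨t, ht⟩ hk hc
        rw [hinner, hlv, hlv] at hd
        have hIH : (∑ j, a ⟨t, ht⟩ j) = 0 := ih ht (by omega)
        have hle : (∑ j, a (⟨t + 1, hk⟩ : Fin m) j) ≤ 0 := by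
          rw [hIH] at hd; linarith
        have hge : 0 ≤ ∑ j, a (⟨t + 1, hk⟩ : Fin m) j :=
          Finset.sum_nonneg fun j _ => ha0 _ j
        linarith
  have hall : ∀ i j, a i j = 0 := by
    intro i j
    by_cases hc : (i : ℕ) < n
    · exact hsupp i j hc
    · push_neg at hc
      have h0 : (∑ j, a i j) = 0 := by
        have := rows i i.isLt (by omega)
        simpa using this
      have := (Finset.sum_eq_zero_iff_of_nonneg fun j _ => ha0 i j).mp h0
      exact this j (Finset.mem_univ j)
  refine ⟨hall, ?_⟩
  rw [hlam]
  refine Finset.sum_eq_zero fun i _ => Finset.sum_eq_zero fun j _ => ?_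
  rw [hall i j, zero_smul]
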